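/- Let P₀, P₁ be probability measures on a measurable space, let (𝒳,d) be a metric space, let a₀, a₁ ∈ 𝒳 with d(a₀;a₁) = 2δ, and let â be any measurable estimator based on a sample of size n (a measurable function of X₁,…,Xₙ taking values in 𝒳). Then max_{i∈{0,1}} P_iⁿ( d(â; a_i) ≥ δ ) ≥ (1 - d_H²(P₀;P₁))^{2n} / 4, where d_H is the Hellinger distance between P₀ and P₁. -/

import Mathlib

open MeasureTheory
open scoped ENNReal

theorem my_lintegral_pi_prod {n : ℕ} {Ω : Type*} [MeasurableSpace Ω] (μ : Measure Ω)
    [SigmaFinite μ] (f : Fin n → Ω → ℝ≥0∞) (hf : ∀ i, Measurable (f i)) :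
    ∫⁻ x : Fin n → Ω, ∏ i, f i (x i) ∂(Measure.pi fun _ => μ) = ∏ i, ∫⁻ x, f i x ∂μ := by
  induction n with
  | zero => simp [Measure.pi_univ]
  | succ n ih =>
    have hmp := measurePreserving_piFinSuccAbove (fun _ : Fin (n+1) => μ) 0
    have hemb := (MeasurableEquiv.piFinSuccAbove (fun _ : Fin (n+1) => Ω) 0).measurableEmbedding
    have key := hmp.lintegral_comp_emb hemb
      (fun y : Ω × (Fin n → Ω) => f 0 y.1 * ∏ j : Fin n, f j.succ (y.2 j))
    have h1 : ∀ x : Fin (n+1) → Ω,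
        (fun y : Ω × (Fin n → Ω) => f 0 y.1 * ∏ j : Fin n, f j.succ (y.2 j))
          ((MeasurableEquiv.piFinSuccAbove (fun _ : Fin (n+1) => Ω) 0) x)
        = ∏ i, f i (x i) := by
      intro x
      rw [Fin.prod_univ_succ]
      simp [MeasurableEquiv.piFinSuccAbove, Fin.succAbove, Fin.tail]
    simp_rw [h1] at key
    have hg : Measurable fun y : Fin n → Ω => ∏ j : Fin n, f j.succ (y j) :=
      Finset.measurable_prod Finset.univ fun j _ => (hf j.succ).comp (measurable_pi_apply j)
    rw [key, lintegral_prod_mul (f := f 0) (g := fun y : Fin n → Ω => ∏ j : Fin n, f j.succ (y j))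
        (hf 0).aemeasurable hg.aemeasurable,
      ih (fun j => f j.succ) (fun j => hf j.succ), Fin.prod_univ_succ]

theorem my_pi_withDensity {n : ℕ} {Ω : Type*} [MeasurableSpace Ω] (μ : Measure Ω) [SigmaFinite μ]
    (f : Ω → ℝ≥0∞) (hf : Measurable f) [SigmaFinite (μ.withDensity f)] :
    Measure.pi (fun _ : Fin n => μ.withDensity f)
      = (Measure.pi fun _ : Fin n => μ).withDensity fun x => ∏ i, f (x i) := by
  refine Measure.pi_eq fun s hs => ?_
  rw [withDensity_apply _ (MeasurableSet.univ_pi hs),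
    ← lintegral_indicator (MeasurableSet.univ_pi hs)]
  have h1 : ∀ x : Fin n → Ω, (Set.univ.pi s).indicator (fun x => ∏ i, f (x i)) x
      = ∏ i, (s i).indicator f (x i) := by
    intro x
    by_cases h : x ∈ Set.univ.pi s
    · rw [Set.indicator_of_mem h]
      exact Finset.prod_congr rfl fun i _ =>
        (Set.indicator_of_mem (h i (Set.mem_univ i)) f).symm
    · rw [Set.indicator_of_notMem h]
      rw [Set.mem_univ_pi] at h
      push_neg at h
      obtain ⟨i, hi⟩ := h
      exact (Finset.prod_eq_zero (Finset.mem_univ i) (Set.indicator_of_notMem hi f)).symm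
  simp_rw [h1]
  rw [my_lintegral_pi_prod μ _ (fun i => hf.indicator (hs i))]
  exact Finset.prod_congr rfl fun i _ => by
    rw [lintegral_indicator (hs i), ← withDensity_apply _ (hs i)]

/-- Two-point minimax lower bound (Lemma 3.1): if `P₀, P₁` are probability measures with
densities `f₀, f₁` w.r.t. a common dominating measure, `a₀, a₁` are points of a metric space
with `d(a₀;a₁) = 2δ`, and `â` is any measurable estimator based on a sample of size `n`, then
`max_i P_iⁿ(d(â;a_i) ≥ δ) ≥ (1 - d_H²(P₀;P₁))^(2n) / 4`, where
`d_H²(P₀;P₁) = 1 - ∫ √(f₀ f₁)` is the squared Hellinger distance. -/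
theorem two_point_minimax_lower_bound {Ω : Type*} [MeasurableSpace Ω]
    {X : Type*} [MetricSpace X] [MeasurableSpace X] [BorelSpace X]
    (μ : Measure Ω) [SigmaFinite μ] (f₀ f₁ : Ω → ℝ)
    (hf₀ : Measurable f₀) (hf₁ : Measurable f₁)
    (hf₀nn : ∀ x, 0 ≤ f₀ x) (hf₁nn : ∀ x, 0 ≤ f₁ x)
    (P₀ P₁ : Measure Ω)
    (hP₀ : P₀ = μ.withDensity fun x => ENNReal.ofReal (f₀ x))
    (hP₁ : P₁ = μ.withDensity fun x => ENNReal.ofReal (f₁ x))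
    (hP₀p : IsProbabilityMeasure P₀) (hP₁p : IsProbabilityMeasure P₁)
    (dH2 : ℝ) (hdH2 : dH2 = 1 - ∫ y, Real.sqrt (f₀ y * f₁ y) ∂μ)
    (a₀ a₁ : X) (δ : ℝ) (hδ : dist a₀ a₁ = 2 * δ)
    (n : ℕ) (est : (Fin n → Ω) → X) (hest : Measurable est) :
    max ((Measure.pi fun _ : Fin n => P₀) {x | δ ≤ dist (est x) a₀})
        ((Measure.pi fun _ : Fin n => P₁) {x | δ ≤ dist (est x) a₁})
      ≥ ENNReal.ofReal ((1 - dH2) ^ (2 * n) / 4) := by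
  -- basic densities
  set F₀ : Ω → ℝ≥0∞ := fun x => ENNReal.ofReal (f₀ x) with hF₀def
  set F₁ : Ω → ℝ≥0∞ := fun x => ENNReal.ofReal (f₁ x) with hF₁def
  have hF₀m : Measurable F₀ := ENNReal.measurable_ofReal.comp hf₀
  have hF₁m : Measurable F₁ := ENNReal.measurable_ofReal.comp hf₁
  have hsf₀ : SigmaFinite (μ.withDensity F₀) := by rw [← hP₀]; infer_instance
  have hsf₁ : SigmaFinite (μ.withDensity F₁) := by rw [← hP₁]; infer_instance
  set ν : Measure (Fin n → Ω) := Measure.pi fun _ => μ with hνdef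
  set G₀ : (Fin n → Ω) → ℝ≥0∞ := fun x => ∏ i, F₀ (x i) with hG₀def
  set G₁ : (Fin n → Ω) → ℝ≥0∞ := fun x => ∏ i, F₁ (x i) with hG₁def
  have hG₀m : Measurable G₀ :=
    Finset.measurable_prod Finset.univ fun i _ => hF₀m.comp (measurable_pi_apply i)
  have hG₁m : Measurable G₁ :=
    Finset.measurable_prod Finset.univ fun i _ => hF₁m.comp (measurable_pi_apply i)
  have hpi₀ : (Measure.pi fun _ : Fin n => P₀) = ν.withDensity G₀ := by
    rw [hP₀]; exact my_pi_withDensity μ F₀ hF₀m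
  have hpi₁ : (Measure.pi fun _ : Fin n => P₁) = ν.withDensity G₁ := by
    rw [hP₁]; exact my_pi_withDensity μ F₁ hF₁m
  have hpm₀ : IsProbabilityMeasure (Measure.pi fun _ : Fin n => P₀) := by infer_instance
  have hpm₁ : IsProbabilityMeasure (Measure.pi fun _ : Fin n => P₁) := by infer_instance
  have hG₀int : ∫⁻ x, G₀ x ∂ν = 1 := by
    rw [← setLIntegral_univ, ← withDensity_apply _ MeasurableSet.univ, ← hpi₀, measure_univ]
  have hG₁int : ∫⁻ x, G₁ x ∂ν = 1 := by
    rw [← setLIntegral_univ, ← withDensity_apply _ MeasurableSet.univ, ← hpi₁, measure_univ]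
  -- the two events
  set E₀ : Set (Fin n → Ω) := {x | δ ≤ dist (est x) a₀} with hE₀def
  set E₁ : Set (Fin n → Ω) := {x | δ ≤ dist (est x) a₁} with hE₁def
  have hE₀m : MeasurableSet E₀ :=
    hest ((isClosed_le continuous_const (continuous_id.dist continuous_const)).measurableSet)
  have hE₁m : MeasurableSet E₁ :=
    hest ((isClosed_le continuous_const (continuous_id.dist continuous_const)).measurableSet)
  have hcov : ∀ x, x ∉ E₀ → x ∈ E₁ := by
    intro x hx
    simp only [hE₀def, Set.mem_setOf_eq, not_le] at hx
    simp only [hE₁def, Set.mem_setOf_eq]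
    have h3 := dist_triangle a₀ (est x) a₁
    rw [dist_comm a₀ (est x)] at h3
    by_contra h
    push_neg at h
    linarith [hδ]
  -- min bound
  set m : (Fin n → Ω) → ℝ≥0∞ := fun x => min (G₀ x) (G₁ x) with hmdef
  have hmm : Measurable m := hG₀m.min hG₁m
  have step1 : ∫⁻ x, m x ∂ν ≤ ν.withDensity G₀ E₀ + ν.withDensity G₁ E₁ := by
    rw [← lintegral_add_compl m hE₀m, withDensity_apply _ hE₀m, withDensity_apply _ hE₁m]
    refine add_le_add (setLIntegral_mono' hE₀m fun x _ => min_le_left _ _) ?_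
    calc ∫⁻ x in E₀ᶜ, m x ∂ν ≤ ∫⁻ x in E₁, m x ∂ν := lintegral_mono_set fun x hx => hcov x hx
      _ ≤ ∫⁻ x in E₁, G₁ x ∂ν := setLIntegral_mono' hE₁m fun x _ => min_le_right _ _
  -- Cauchy-Schwarz
  set S : ℝ≥0∞ := ∫⁻ x, (G₀ x * G₁ x) ^ (1/2 : ℝ) ∂ν with hSdef
  have hconj : Real.HolderConjugate 2 2 := ⟨by norm_num, by norm_num, by norm_num⟩
  have hCS : S ≤ (∫⁻ x, m x ∂ν) ^ (1/2 : ℝ) * (∫⁻ x, max (G₀ x) (G₁ x) ∂ν) ^ (1/2 : ℝ) := by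
    have h := ENNReal.lintegral_mul_le_Lp_mul_Lq ν hconj
      (f := fun x => m x ^ (1/2 : ℝ)) (g := fun x => max (G₀ x) (G₁ x) ^ (1/2 : ℝ))
      ((ENNReal.continuous_rpow_const.measurable.comp hmm).aemeasurable)
      ((ENNReal.continuous_rpow_const.measurable.comp (hG₀m.max hG₁m)).aemeasurable)
    have e1 : ∀ x : Fin n → Ω,
        ((fun x => m x ^ (1/2 : ℝ)) * fun x => max (G₀ x) (G₁ x) ^ (1/2 : ℝ)) x
          = (G₀ x * G₁ x) ^ (1/2 : ℝ) := by
      intro x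
      simp only [Pi.mul_apply]
      rw [← ENNReal.mul_rpow_of_nonneg _ _ (by norm_num : (0:ℝ) ≤ 1/2), min_mul_max]
    have e2 : ∀ y : ℝ≥0∞, (y ^ (1/2 : ℝ)) ^ (2 : ℝ) = y := by
      intro y
      rw [← ENNReal.rpow_mul]
      norm_num
    simp_rw [e1, e2] at h
    rw [hSdef]
    convert h using 2
  have hmax2 : ∫⁻ x, max (G₀ x) (G₁ x) ∂ν ≤ 2 := by
    calc ∫⁻ x, max (G₀ x) (G₁ x) ∂ν ≤ ∫⁻ x, G₀ x + G₁ x ∂ν :=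
          lintegral_mono fun x => max_le le_self_add le_add_self
      _ = 2 := by rw [lintegral_add_left hG₀m, hG₀int, hG₁int, one_add_one_eq_two]
  have hS : S ≤ (∫⁻ x, m x ∂ν) ^ (1/2 : ℝ) * (2 : ℝ≥0∞) ^ (1/2 : ℝ) := by
    exact hCS.trans (mul_le_mul_right (ENNReal.rpow_le_rpow hmax2 (by norm_num)) _)
  have hS2 : S ^ 2 ≤ (∫⁻ x, m x ∂ν) * 2 := by
    calc S ^ 2 ≤ ((∫⁻ x, m x ∂ν) ^ (1/2 : ℝ) * (2 : ℝ≥0∞) ^ (1/2 : ℝ)) ^ 2 := by gcongr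
      _ = (∫⁻ x, m x ∂ν) * 2 := by
        rw [mul_pow, ← ENNReal.rpow_natCast (_ ^ (1/2:ℝ)) 2, ← ENNReal.rpow_natCast ((2:ℝ≥0∞) ^ (1/2:ℝ)) 2,
          ← ENNReal.rpow_mul, ← ENNReal.rpow_mul]
        norm_num
  -- product structure of S
  set a : ℝ≥0∞ := ∫⁻ y, (F₀ y * F₁ y) ^ (1/2 : ℝ) ∂μ with hadef
  have hSa : S = a ^ n := by
    have e3 : ∀ x : Fin n → Ω, (G₀ x * G₁ x) ^ (1/2 : ℝ)
        = ∏ i, (F₀ (x i) * F₁ (x i)) ^ (1/2 : ℝ) := by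
      intro x
      rw [hG₀def, hG₁def, ← Finset.prod_mul_distrib,
        ← ENNReal.prod_rpow_of_nonneg (by norm_num : (0:ℝ) ≤ 1/2)]
    rw [hSdef, hνdef]
    simp_rw [e3]
    rw [my_lintegral_pi_prod μ (fun _ y => (F₀ y * F₁ y) ^ (1/2 : ℝ)) (fun i =>
      ENNReal.continuous_rpow_const.measurable.comp (hF₀m.mul hF₁m))]
    simp [hadef]
  -- identify a with the Hellinger affinity
  have hf₀int : Integrable f₀ μ := by
    refine ⟨hf₀.aestronglyMeasurable, ?_⟩
    rw [hasFiniteIntegral_iff_ofReal (Filter.Eventually.of_forall hf₀nn)]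
    have : ∫⁻ y, ENNReal.ofReal (f₀ y) ∂μ = P₀ Set.univ := by
      rw [hP₀, withDensity_apply _ MeasurableSet.univ, setLIntegral_univ]
    rw [this, measure_univ]
    exact ENNReal.one_lt_top
  have hf₁int : Integrable f₁ μ := by
    refine ⟨hf₁.aestronglyMeasurable, ?_⟩
    rw [hasFiniteIntegral_iff_ofReal (Filter.Eventually.of_forall hf₁nn)]
    have : ∫⁻ y, ENNReal.ofReal (f₁ y) ∂μ = P₁ Set.univ := by
      rw [hP₁, withDensity_apply _ MeasurableSet.univ, setLIntegral_univ]
    rw [this, measure_univ]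
    exact ENNReal.one_lt_top
  have hsqint : Integrable (fun y => Real.sqrt (f₀ y * f₁ y)) μ := by
    refine Integrable.mono' (hf₀int.add hf₁int)
      ((hf₀.mul hf₁).sqrt.aestronglyMeasurable) (Filter.Eventually.of_forall fun y => ?_)
    rw [Real.norm_eq_abs, abs_of_nonneg (Real.sqrt_nonneg _)]
    have h1 : f₀ y * f₁ y ≤ (f₀ y + f₁ y) ^ 2 := by nlinarith [hf₀nn y, hf₁nn y]
    calc Real.sqrt (f₀ y * f₁ y) ≤ Real.sqrt ((f₀ y + f₁ y) ^ 2) := Real.sqrt_le_sqrt h1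
      _ = f₀ y + f₁ y := Real.sqrt_sq (by linarith [hf₀nn y, hf₁nn y])
  set A : ℝ := ∫ y, Real.sqrt (f₀ y * f₁ y) ∂μ with hAdef
  have hA0 : 0 ≤ A := integral_nonneg fun y => Real.sqrt_nonneg _
  have haA : a = ENNReal.ofReal A := by
    rw [hadef, hAdef, ofReal_integral_eq_lintegral_ofReal hsqint
      (Filter.Eventually.of_forall fun y => Real.sqrt_nonneg _)]
    refine lintegral_congr fun y => ?_
    rw [Real.sqrt_eq_rpow,
      ← ENNReal.ofReal_rpow_of_nonneg (mul_nonneg (hf₀nn y) (hf₁nn y)) (by norm_num : (0:ℝ) ≤ 1/2),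
      ENNReal.ofReal_mul (hf₀nn y)]
  -- final assembly
  have h1A : 1 - dH2 = A := by rw [hdH2, hAdef]; ring
  rw [ge_iff_le, h1A, ENNReal.ofReal_div_of_pos (by norm_num : (0:ℝ) < 4),
    ENNReal.ofReal_pow hA0, ← haA]
  have h4 : ENNReal.ofReal (4:ℝ) = 4 := by norm_num
  rw [h4]
  rw [ENNReal.div_le_iff_le_mul (Or.inl (by norm_num)) (Or.inl (by norm_num))]
  have key : a ^ (2 * n) ≤ (max (ν.withDensity G₀ E₀) (ν.withDensity G₁ E₁)) * 4 := by
    calc a ^ (2 * n) = (a ^ n) ^ 2 := by rw [← pow_mul, mul_comm]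
      _ = S ^ 2 := by rw [hSa]
      _ ≤ (∫⁻ x, m x ∂ν) * 2 := hS2
      _ ≤ (ν.withDensity G₀ E₀ + ν.withDensity G₁ E₁) * 2 := by gcongr
      _ ≤ (max (ν.withDensity G₀ E₀) (ν.withDensity G₁ E₁) +
            max (ν.withDensity G₀ E₀) (ν.withDensity G₁ E₁)) * 2 := by
          gcongr
          · exact le_max_left _ _
          · exact le_max_right _ _
      _ = (max (ν.withDensity G₀ E₀) (ν.withDensity G₁ E₁)) * 4 := by ring
  calc a ^ (2 * n) ≤ (max (ν.withDensity G₀ E₀) (ν.withDensity G₁ E₁)) * 4 := key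
    _ = (max ((Measure.pi fun _ : Fin n => P₀) E₀) ((Measure.pi fun _ : Fin n => P₁) E₁)) * 4 := by
        rw [hpi₀, hpi₁]
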